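/- Let p be an odd prime, k a positive integer, and s ≥ 1 an integer. Then ρ_{k,0}(p^s) = (Σ_{i=0}^{⌊(s−1)/2⌋} p^{ki + (s−2i−1)(k−1)}) · (ρ_{k,0}(p) − 1) + p^{k·⌊s/2⌋}. -/

import Mathlib

open Finset

/-- `rho k lam n` is the number of `k`-tuples `(x₁,…,x_k) ∈ (ℤ/nℤ)^k` with
`x₁² + ⋯ + x_k² ≡ lam (mod n)`. -/
noncomputable def rho (k : ℕ) (lam : ℤ) (n : ℕ) : ℕ :=
  Nat.card {x : Fin k → ZMod n // ∑ i, x i ^ 2 = (lam : ZMod n)}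

section helpers

lemma fiber_card' {G H : Type*} [AddCommGroup G] [AddCommGroup H] [Fintype G] [Fintype H]
    [DecidableEq H] (f : G →+ H) (hf : Function.Surjective f) (b : H) :
    (univ.filter (fun g => f g = b)).card * Fintype.card H = Fintype.card G := by
  have key : ∀ b : H, (univ.filter (fun g => f g = b)).card
      = (univ.filter (fun g => f g = 0)).card := by
    intro b
    obtain ⟨a₀, ha₀⟩ := hf b
    apply Finset.card_bij (fun a _ => a - a₀)
    · intro a ha
      simp only [mem_filter, mem_univ, true_and] at ha ⊢
      rw [map_sub, ha, ha₀, sub_self]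
    · intro a ha a' ha' h
      exact sub_left_injective h
    · intro c hc
      refine ⟨c + a₀, ?_, by abel⟩
      simp only [mem_filter, mem_univ, true_and] at hc ⊢
      rw [map_add, hc, ha₀, zero_add]
  have h := Finset.card_eq_sum_card_fiberwise
    (f := f) (s := (univ : Finset G)) (t := (univ : Finset H)) (fun x _ => mem_univ _)
  rw [key b, mul_comm]
  calc Fintype.card H * (univ.filter (fun g => f g = 0)).card
      = ∑ _b : H, (univ.filter (fun g => f g = 0)).card := by
        rw [Finset.sum_const, card_univ, smul_eq_mul]
    _ = ∑ b : H, (univ.filter (fun g => f g = b)).card := by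
        exact Finset.sum_congr rfl (fun b _ => (key b).symm)
    _ = Fintype.card G := by rw [← h, card_univ]

lemma lin_count (p : ℕ) [Fact p.Prime] (k : ℕ) (a : Fin k → ZMod p) (j : Fin k)
    (haj : a j ≠ 0) (b : ZMod p) :
    (univ.filter (fun t : Fin k → ZMod p => ∑ i, a i * t i = b)).card = p ^ (k - 1) := by
  have hk : 0 < k := j.pos
  set f : (Fin k → ZMod p) →+ ZMod p :=
    { toFun := fun t => ∑ i, a i * t i
      map_zero' := by simp
      map_add' := by
        intro x y
        simp [mul_add, Finset.sum_add_distrib] } with hf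
  have hsurj : Function.Surjective f := by
    intro c
    refine ⟨fun i => if i = j then (a j)⁻¹ * c else 0, ?_⟩
    simp only [hf, AddMonoidHom.coe_mk, ZeroHom.coe_mk]
    rw [Finset.sum_eq_single j]
    · rw [if_pos rfl, ← mul_assoc, mul_inv_cancel₀ haj, one_mul]
    · intro i _ hij; rw [if_neg hij, mul_zero]
    · intro h; exact absurd (mem_univ j) h
  have h1 := fiber_card' f hsurj b
  simp only [ZMod.card, Fintype.card_fun, Fintype.card_fin] at h1
  have hppos : 0 < p := (Fact.out : p.Prime).pos
  have h2 : (univ.filter (fun t : Fin k → ZMod p => ∑ i, a i * t i = b)).card * p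
      = p ^ (k-1) * p := by
    rw [← pow_succ, Nat.sub_add_cancel hk]; exact h1
  exact Nat.eq_of_mul_eq_mul_right hppos h2

lemma comp_count {A B : Type*} [Fintype A] [Fintype B] [DecidableEq B] (f : A → B) (c : ℕ)
    (hf : ∀ b : B, (univ.filter (fun x => f x = b)).card = c) (P : B → Prop) [DecidablePred P] :
    (univ.filter (fun x => P (f x))).card = c * (univ.filter P).card := by
  have h := Finset.card_eq_sum_card_fiberwise
    (f := f) (s := univ.filter (fun x => P (f x))) (t := univ.filter P)
    (fun x hx => by simp only [Finset.mem_coe, mem_filter, mem_univ, true_and] at hx ⊢; exact hx)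
  rw [h]
  rw [Finset.sum_congr rfl (fun b hb => ?_), Finset.sum_const, smul_eq_mul, mul_comm]
  simp only [mem_filter, mem_univ, true_and] at hb
  rw [← hf b]
  congr 1
  ext x
  simp only [mem_filter, mem_univ, true_and, and_iff_right_iff_imp]
  intro hfx; rw [hfx]; exact hb

lemma cast_mod_zmod (n m a : ℕ) (h : n ∣ m) : ((a % m : ℕ) : ZMod n) = (a : ZMod n) := by
  conv_rhs => rw [← Nat.mod_add_div a m]
  push_cast
  rw [(ZMod.natCast_eq_zero_iff m n).2 h]
  ring

lemma red_fiber_count (p k : ℕ) (s r : ℕ) (hle : r ≤ s) (hppos : 0 < p)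
    [NeZero (p ^ r)] [NeZero (p ^ s)]
    (w : Fin k → ZMod (p ^ r)) :
    (univ.filter (fun z : Fin k → ZMod (p ^ s) =>
      (fun i => ((z i).val : ZMod (p ^ r))) = w)).card = p ^ ((s - r) * k) := by
  have hdvd : p ^ r ∣ p ^ s := pow_dvd_pow p hle
  set f : (Fin k → ZMod (p ^ s)) →+ (Fin k → ZMod (p ^ r)) :=
    { toFun := fun z => fun i => ((z i).val : ZMod (p ^ r))
      map_zero' := by
        funext i
        simp [ZMod.val_zero]
      map_add' := by
        intro x y
        funext i
        simp only [Pi.add_apply, ZMod.val_add]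
        rw [cast_mod_zmod _ _ _ hdvd]
        push_cast
        ring } with hfdef
  have hsurj : Function.Surjective f := by
    intro w
    refine ⟨fun i => ((w i).val : ZMod (p ^ s)), ?_⟩
    funext i
    simp only [hfdef, AddMonoidHom.coe_mk, ZeroHom.coe_mk]
    rw [ZMod.val_natCast, cast_mod_zmod _ _ _ hdvd, ZMod.natCast_zmod_val]
  have h := fiber_card' f hsurj w
  simp only [Fintype.card_fun, Fintype.card_fin, ZMod.card] at h
  have hpos : 0 < (p ^ r) ^ k := pow_pos (Nat.pow_pos (n := r) hppos) k
  apply Nat.eq_of_mul_eq_mul_right hpos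
  have hrfl : (univ.filter (fun z : Fin k → ZMod (p ^ s) =>
      (fun i => ((z i).val : ZMod (p ^ r))) = w)) = (univ.filter (fun g => f g = w)) := rfl
  rw [hrfl, h, ← pow_mul, ← pow_mul, ← pow_add, ← Nat.add_mul, Nat.sub_add_cancel hle]

lemma imp_count (p : ℕ) (hp : p.Prime) (k : ℕ) (s : ℕ)
    [NeZero (p ^ s)] [NeZero (p ^ (s+2))] :
    (univ.filter (fun x : Fin k → ZMod (p ^ (s+2)) =>
        (∑ i, x i ^ 2 = 0) ∧ ∀ i, p ∣ (x i).val)).card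
      = p ^ k * (univ.filter (fun w : Fin k → ZMod (p ^ s) => ∑ i, w i ^ 2 = 0)).card := by
  haveI : NeZero (p ^ (s+1)) := ⟨(pow_pos hp.pos (s+1)).ne'⟩
  have hTcard : (univ.filter (fun z : Fin k → ZMod (p ^ (s+1)) =>
      ∑ i, ((z i).val : ZMod (p ^ s)) ^ 2 = 0)).card
      = p ^ k * (univ.filter (fun w : Fin k → ZMod (p ^ s) => ∑ i, w i ^ 2 = 0)).card := by
    have := comp_count (fun z : Fin k → ZMod (p ^ (s+1)) => fun i => ((z i).val : ZMod (p ^ s)))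
      (p ^ k) (fun w => by
        have := red_fiber_count p k (s+1) s (Nat.le_succ s) hp.pos w
        simpa using this)
      (fun w : Fin k → ZMod (p ^ s) => ∑ i, w i ^ 2 = 0)
    exact this
  rw [← hTcard]
  have hvlt : ∀ (w : Fin k → ZMod (p^(s+1))) i,
      ((p * (w i).val : ℕ) : ZMod (p ^ (s+2))).val = p * (w i).val := by
    intro w i
    apply ZMod.val_natCast_of_lt
    calc p * (w i).val < p * p ^ (s+1) := (Nat.mul_lt_mul_left hp.pos).mpr (ZMod.val_lt _)
      _ = p ^ (s+2) := by ring
  refine (Finset.card_bij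
    (i := fun (z : Fin k → ZMod (p ^ (s+1))) (_ : z ∈ univ.filter (fun z : Fin k → ZMod (p ^ (s+1)) =>
      ∑ i, ((z i).val : ZMod (p ^ s)) ^ 2 = 0)) =>
      (fun i => ((p * (z i).val : ℕ) : ZMod (p ^ (s+2))) : Fin k → ZMod (p ^ (s+2))))
    ?_ ?_ ?_).symm
  · intro z hz
    simp only [mem_filter, mem_univ, true_and] at hz ⊢
    have hz' : (p:ℕ) ^ s ∣ ∑ i, (z i).val ^ 2 := by
      rw [← ZMod.natCast_eq_zero_iff]
      push_cast
      exact hz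
    constructor
    · have key : (∑ i, (((p * (z i).val : ℕ) : ZMod (p^(s+2)))) ^ 2)
          = ((∑ i, (p * (z i).val)^2 : ℕ) : ZMod (p^(s+2))) := by push_cast; ring
      rw [key, ZMod.natCast_eq_zero_iff]
      have e1 : ∑ i, (p * (z i).val) ^ 2 = p ^ 2 * ∑ i, (z i).val ^ 2 := by
        rw [Finset.mul_sum]; exact Finset.sum_congr rfl (fun i _ => by ring)
      have e2 : (p:ℕ) ^ (s+2) = p ^ 2 * p ^ s := by ring
      rw [e1, e2]
      exact Nat.mul_dvd_mul_left _ hz'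
    · intro i
      rw [hvlt z i]
      exact Dvd.intro _ rfl
  · intro z hz z' hz' h
    funext i
    have h1 : ((p * (z i).val : ℕ) : ZMod (p ^ (s+2)))
        = ((p * (z' i).val : ℕ) : ZMod (p ^ (s+2))) := congrFun h i
    have h2 := congrArg ZMod.val h1
    rw [hvlt z i, hvlt z' i] at h2
    exact ZMod.val_injective _ (Nat.eq_of_mul_eq_mul_left hp.pos h2)
  · intro x hx
    simp only [mem_filter, mem_univ, true_and] at hx
    obtain ⟨hsum, hdvd⟩ := hx
    have hvv : ∀ i, (((x i).val / p : ℕ) : ZMod (p ^ (s+1))).val = (x i).val / p := by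
      intro i
      apply ZMod.val_natCast_of_lt
      apply Nat.div_lt_of_lt_mul
      calc (x i).val < p ^ (s+2) := ZMod.val_lt _
        _ = p * p ^ (s+1) := by ring
    refine ⟨fun i => (((x i).val / p : ℕ) : ZMod (p ^ (s+1))), ?_, ?_⟩
    · simp only [mem_filter, mem_univ, true_and]
      have h2 : (p:ℕ)^(s+2) ∣ ∑ i, (x i).val ^ 2 := by
        rw [← ZMod.natCast_eq_zero_iff]
        push_cast
        simp only [ZMod.natCast_zmod_val]
        exact hsum
      have h3 : ∑ i, (x i).val ^ 2 = p ^ 2 * ∑ i, ((x i).val / p) ^ 2 := by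
        rw [Finset.mul_sum]
        refine Finset.sum_congr rfl (fun i _ => ?_)
        obtain ⟨c, hc⟩ := hdvd i
        rw [hc, Nat.mul_div_cancel_left c hp.pos]
        ring
      have hA : (p:ℕ) ^ s ∣ ∑ i, ((x i).val / p) ^ 2 := by
        have e2 : (p:ℕ) ^ (s+2) = p ^ 2 * p ^ s := by ring
        exact (Nat.mul_dvd_mul_iff_left (pow_pos hp.pos 2)).mp (by rw [← e2, ← h3]; exact h2)
      have goal_eq : ∑ i, (((((x i).val / p : ℕ) : ZMod (p^(s+1))).val : ℕ) : ZMod (p^s)) ^ 2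
          = ((∑ i, ((x i).val / p) ^ 2 : ℕ) : ZMod (p ^ s)) := by
        push_cast
        exact Finset.sum_congr rfl (fun i _ => by rw [hvv i])
      rw [goal_eq, ZMod.natCast_eq_zero_iff]
      exact hA
    · funext i
      show ((p * ((((x i).val / p : ℕ) : ZMod (p^(s+1))).val) : ℕ) : ZMod (p^(s+2))) = x i
      rw [hvv i, Nat.mul_div_cancel' (hdvd i), ZMod.natCast_zmod_val]

lemma fiber_lift (p : ℕ) (hp : p.Prime) (hodd : Odd p) (k s : ℕ) (hs : 1 ≤ s)
    [NeZero (p^s)] [NeZero (p^(s+1))]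
    (xb : Fin k → ZMod (p^s)) (hsum : ∑ i, xb i ^ 2 = 0) (j : Fin k) (hj : ¬ p ∣ (xb j).val) :
    ((univ.filter (fun y : Fin k → ZMod (p^(s+1)) =>
        ((∑ i, y i ^ 2 = 0) ∧ ∃ i, ¬ p ∣ (y i).val) ∧
          (fun i => ((y i).val : ZMod (p^s))) = xb)).card) = p ^ (k-1) := by
  haveI : Fact p.Prime := ⟨hp⟩
  set v : Fin k → ℕ := fun i => (xb i).val with hv
  have hA : (p:ℕ)^s ∣ ∑ i, v i ^ 2 := by
    rw [← ZMod.natCast_eq_zero_iff]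
    push_cast
    simp only [hv, ZMod.natCast_zmod_val]
    exact hsum
  set a : ℕ := (∑ i, v i ^ 2) / p^s with ha
  have haA : ∑ i, v i ^ 2 = p^s * a := (Nat.mul_div_cancel' hA).symm
  set c : Fin k → ZMod p := fun i => 2 * ((v i : ZMod p)) with hc
  have h2ne : (2 : ZMod p) ≠ 0 := by
    have : ((2:ℕ) : ZMod p) ≠ 0 := by
      rw [Ne, ZMod.natCast_eq_zero_iff]
      intro h
      rcases (Nat.prime_dvd_prime_iff_eq hp Nat.prime_two).mp h with rfl
      exact (Nat.not_odd_iff_even.mpr (by norm_num)) hodd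
    simpa using this
  have hcj : c j ≠ 0 := by
    apply mul_ne_zero h2ne
    rw [Ne, ZMod.natCast_eq_zero_iff]
    exact hj
  have expand : ∀ tv : Fin k → ℕ, ∑ i, (v i + p^s * tv i)^2
      = (∑ i, v i ^ 2) + p^s * (2 * ∑ i, v i * tv i + p^s * ∑ i, tv i ^ 2) := by
    intro tv
    have h1 : ∀ i ∈ univ, (v i + p^s*tv i)^2
        = v i^2 + (2*(v i * tv i) + p^s * tv i^2) * p^s := fun i _ => by ring
    rw [Finset.sum_congr rfl h1, Finset.sum_add_distrib, ← Finset.sum_mul,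
      Finset.sum_add_distrib, ← Finset.mul_sum, ← Finset.mul_sum]
    ring
  have equiv : ∀ t : Fin k → ZMod p, (∑ i, c i * t i = -(a : ZMod p))
      ↔ ((p:ℕ)^(s+1) ∣ ∑ i, (v i + p^s * (t i).val)^2) := by
    intro t
    rw [expand, haA, ← Nat.mul_add, pow_succ,
      Nat.mul_dvd_mul_iff_left (pow_pos hp.pos s),
      ← ZMod.natCast_eq_zero_iff]
    push_cast
    rw [show ((p:ZMod p))^s = 0 by
      rw [show ((p:ZMod p)) = 0 from ZMod.natCast_self p, zero_pow (by omega : s ≠ 0)]]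
    rw [zero_mul, add_zero]
    simp only [ZMod.natCast_zmod_val]
    have hl : ∑ i, c i * t i = 2 * ∑ i, (v i : ZMod p) * t i := by
      rw [Finset.mul_sum]
      exact Finset.sum_congr rfl (fun i _ => by rw [hc]; ring)
    rw [hl, eq_neg_iff_add_eq_zero, add_comm]
  rw [← lin_count p k c j hcj (-(a : ZMod p))]
  apply (Finset.card_bij
    (i := fun (t : Fin k → ZMod p) (_ : t ∈ univ.filter
        (fun t : Fin k → ZMod p => ∑ i, c i * t i = -(a : ZMod p))) =>
      (fun i => ((v i + p^s * (t i).val : ℕ) : ZMod (p^(s+1))) : Fin k → ZMod (p^(s+1))))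
    ?_ ?_ ?_).symm
  · intro t ht
    simp only [mem_filter, mem_univ, true_and] at ht ⊢
    have hvlt : ∀ i, ((v i + p^s * (t i).val : ℕ) : ZMod (p^(s+1))).val
        = v i + p^s * (t i).val := by
      intro i
      apply ZMod.val_natCast_of_lt
      have h1 : v i < p^s := ZMod.val_lt _
      have h2 : (t i).val < p := ZMod.val_lt _
      calc v i + p^s * (t i).val < p^s + p^s * (t i).val := by omega
        _ = p^s * ((t i).val + 1) := by ring
        _ ≤ p^s * p := Nat.mul_le_mul_left _ (by omega)
        _ = p^(s+1) := by ring
    refine ⟨⟨?_, ⟨j, ?_⟩⟩, ?_⟩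
    · have hdvd := (equiv t).mp ht
      have key : ∑ i, ((v i + p^s * (t i).val : ℕ) : ZMod (p^(s+1)))^2
          = ((∑ i, (v i + p^s * (t i).val)^2 : ℕ) : ZMod (p^(s+1))) := by push_cast; ring
      rw [key, ZMod.natCast_eq_zero_iff]
      exact hdvd
    · rw [hvlt j]
      have hps : p ∣ p^s * (t j).val := Dvd.dvd.mul_right (dvd_pow_self p (by omega)) _
      intro hcon
      exact hj ((Nat.dvd_add_right hps).mp (by rwa [add_comm] at hcon))
    · funext i
      show (((v i + p^s * (t i).val : ℕ) : ZMod (p^(s+1))).val : ZMod (p^s)) = xb i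
      rw [hvlt i]
      push_cast
      rw [show ((p:ZMod (p^s)))^s = 0 by
        rw [← Nat.cast_pow, ZMod.natCast_self]]
      rw [zero_mul, add_zero, hv, ZMod.natCast_zmod_val]
  · intro t ht t' ht' h
    have hvlt : ∀ (u : Fin k → ZMod p) i, ((v i + p^s * (u i).val : ℕ) : ZMod (p^(s+1))).val
        = v i + p^s * (u i).val := by
      intro u i
      apply ZMod.val_natCast_of_lt
      have h1 : v i < p^s := ZMod.val_lt _
      have h2 : (u i).val < p := ZMod.val_lt _
      calc v i + p^s * (u i).val < p^s + p^s * (u i).val := by omega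
        _ = p^s * ((u i).val + 1) := by ring
        _ ≤ p^s * p := Nat.mul_le_mul_left _ (by omega)
        _ = p^(s+1) := by ring
    funext i
    have h1 : ((v i + p^s * (t i).val : ℕ) : ZMod (p^(s+1)))
        = ((v i + p^s * (t' i).val : ℕ) : ZMod (p^(s+1))) := congrFun h i
    have h2 := congrArg ZMod.val h1
    rw [hvlt t i, hvlt t' i] at h2
    have := Nat.eq_of_mul_eq_mul_left (pow_pos hp.pos s) (by omega :
      p^s * (t i).val = p^s * (t' i).val)
    exact ZMod.val_injective _ this
  · intro y hy
    simp only [mem_filter, mem_univ, true_and] at hy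
    obtain ⟨⟨hysum, -⟩, hyred⟩ := hy
    set q : Fin k → ℕ := fun i => (y i).val / p^s with hq
    have hmod : ∀ i, (y i).val % p^s = v i := by
      intro i
      have h0 := congrFun hyred i
      have h2 := congrArg ZMod.val h0
      rwa [ZMod.val_natCast] at h2
    have hvq : ∀ i, (y i).val = v i + p^s * q i := by
      intro i
      conv_lhs => rw [← Nat.mod_add_div (y i).val (p^s)]
      rw [hmod i, hq]
    have hqlt : ∀ i, q i < p := by
      intro i
      apply Nat.div_lt_of_lt_mul
      calc (y i).val < p^(s+1) := ZMod.val_lt _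
        _ = p^s * p := by ring
    refine ⟨fun i => ((q i : ℕ) : ZMod p), ?_, ?_⟩
    · simp only [mem_filter, mem_univ, true_and]
      rw [equiv]
      have hvq' : ∀ i, v i + p^s * (((q i : ℕ) : ZMod p)).val = (y i).val := by
        intro i
        rw [ZMod.val_natCast_of_lt (hqlt i), ← hvq i]
      rw [Finset.sum_congr rfl (fun i _ => by rw [hvq' i])]
      rw [← ZMod.natCast_eq_zero_iff]
      push_cast
      simp only [ZMod.natCast_zmod_val]
      exact hysum
    · funext i
      show ((v i + p^s * (((q i : ℕ) : ZMod p)).val : ℕ) : ZMod (p^(s+1))) = y i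
      rw [ZMod.val_natCast_of_lt (hqlt i), ← hvq i, ZMod.natCast_zmod_val]

end helpers

section assembly

lemma rho_card (k n : ℕ) [NeZero n] :
    rho k 0 n = (univ.filter (fun x : Fin k → ZMod n => ∑ i, x i ^ 2 = 0)).card := by
  rw [rho, Nat.card_eq_fintype_card, Fintype.card_subtype]
  norm_num

lemma rho_one (k : ℕ) : rho k 0 1 = 1 := by
  rw [rho_card]
  have h : (univ.filter (fun x : Fin k → ZMod 1 => ∑ i, x i ^ 2 = 0)) = univ := by
    apply Finset.filter_true_of_mem
    intro x _
    exact Subsingleton.elim _ _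
  rw [h, card_univ]
  simp

-- split into primitive and imprimitive solutions
lemma split_count (p : ℕ) (k r : ℕ) [NeZero (p^r)] :
    (univ.filter (fun x : Fin k → ZMod (p^r) => ∑ i, x i ^ 2 = 0)).card
    = (univ.filter (fun x : Fin k → ZMod (p^r) =>
        (∑ i, x i ^ 2 = 0) ∧ ∃ i, ¬ p ∣ (x i).val)).card
    + (univ.filter (fun x : Fin k → ZMod (p^r) =>
        (∑ i, x i ^ 2 = 0) ∧ ∀ i, p ∣ (x i).val)).card := by
  have h := Finset.card_filter_add_card_filter_not
    (s := univ.filter (fun x : Fin k → ZMod (p^r) => ∑ i, x i ^ 2 = 0))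
    (p := fun x => ∃ i, ¬ p ∣ (x i).val)
  rw [Finset.filter_filter, Finset.filter_filter] at h
  have heq : (univ.filter (fun x : Fin k → ZMod (p^r) =>
      (∑ i, x i ^ 2 = 0) ∧ ∀ i, p ∣ (x i).val))
      = (univ.filter (fun x : Fin k → ZMod (p^r) =>
      (∑ i, x i ^ 2 = 0) ∧ ¬ ∃ i, ¬ p ∣ (x i).val)) := by
    apply Finset.filter_congr
    intro x _
    constructor
    · rintro ⟨h1, h2⟩
      exact ⟨h1, fun ⟨i, hi⟩ => hi (h2 i)⟩
    · rintro ⟨h1, h2⟩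
      refine ⟨h1, fun i => ?_⟩
      by_contra hc
      exact h2 ⟨i, hc⟩
  rw [heq]
  exact h.symm

lemma imp_one (p : ℕ) (hp : p.Prime) (k : ℕ) [NeZero (p^1)] :
    (univ.filter (fun x : Fin k → ZMod (p^1) =>
        (∑ i, x i ^ 2 = 0) ∧ ∀ i, p ∣ (x i).val)).card = 1 := by
  have hset : (univ.filter (fun x : Fin k → ZMod (p^1) =>
      (∑ i, x i ^ 2 = 0) ∧ ∀ i, p ∣ (x i).val)) = {0} := by
    ext x
    simp only [mem_filter, mem_univ, true_and, mem_singleton]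
    constructor
    · rintro ⟨-, h2⟩
      funext i
      have hlt : (x i).val < p := by
        have := ZMod.val_lt (x i)
        simpa using this
      have h0 : (x i).val = 0 := Nat.eq_zero_of_dvd_of_lt (h2 i) hlt
      show x i = 0
      exact ZMod.val_injective _ (by rw [h0, ZMod.val_zero])
    · rintro rfl
      exact ⟨by simp, fun i => by simp⟩
  rw [hset, Finset.card_singleton]

-- recursion for primitive solution counts
lemma prim_rec (p : ℕ) (hp : p.Prime) (hodd : Odd p) (k s : ℕ) (hs : 1 ≤ s)
    [NeZero (p^s)] [NeZero (p^(s+1))] :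
    (univ.filter (fun y : Fin k → ZMod (p^(s+1)) =>
        (∑ i, y i ^ 2 = 0) ∧ ∃ i, ¬ p ∣ (y i).val)).card
    = p ^ (k-1) * (univ.filter (fun x : Fin k → ZMod (p^s) =>
        (∑ i, x i ^ 2 = 0) ∧ ∃ i, ¬ p ∣ (x i).val)).card := by
  have hmap : ∀ y ∈ (univ.filter (fun y : Fin k → ZMod (p^(s+1)) =>
      (∑ i, y i ^ 2 = 0) ∧ ∃ i, ¬ p ∣ (y i).val)),
      (fun i => ((y i).val : ZMod (p^s))) ∈ (univ.filter (fun x : Fin k → ZMod (p^s) =>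
      (∑ i, x i ^ 2 = 0) ∧ ∃ i, ¬ p ∣ (x i).val)) := by
    intro y hy
    simp only [mem_filter, mem_univ, true_and] at hy ⊢
    obtain ⟨h1, i0, hi0⟩ := hy
    constructor
    · have hd : (p:ℕ)^(s+1) ∣ ∑ i, (y i).val ^ 2 := by
        rw [← ZMod.natCast_eq_zero_iff]
        push_cast
        simp only [ZMod.natCast_zmod_val]
        exact h1
      have hd' : (p:ℕ)^s ∣ ∑ i, (y i).val ^ 2 := dvd_trans (pow_dvd_pow p (Nat.le_succ s)) hd
      have key : ∑ i, (((y i).val : ZMod (p^s))) ^ 2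
          = ((∑ i, (y i).val ^ 2 : ℕ) : ZMod (p^s)) := by push_cast; ring
      rw [key, ZMod.natCast_eq_zero_iff]
      exact hd'
    · refine ⟨i0, ?_⟩
      rw [ZMod.val_natCast]
      rw [Nat.dvd_mod_iff (dvd_pow_self p (by omega : s ≠ 0))]
      exact hi0
  rw [Finset.card_eq_sum_card_fiberwise hmap]
  rw [Finset.sum_congr rfl (fun xb hxb => ?_), Finset.sum_const, smul_eq_mul, mul_comm]
  simp only [mem_filter, mem_univ, true_and] at hxb
  obtain ⟨hsum, j, hj⟩ := hxb
  rw [Finset.filter_filter]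
  exact fiber_lift p hp hodd k s hs xb hsum j hj

end assembly

/-- For an odd prime `p`,
`ρ_{k,0}(p^s) = (Σ_{i=0}^{⌊(s−1)/2⌋} p^{ki+(s−2i−1)(k−1)}) · (ρ_{k,0}(p) − 1) + p^{k⌊s/2⌋}`. -/
theorem rho_zero_odd_prime_pow (p : ℕ) (hp : p.Prime) (hodd : Odd p) (k : ℕ) (hk : 0 < k)
    (s : ℕ) (hs : 1 ≤ s) :
    rho k 0 (p ^ s) =
      (∑ i ∈ Finset.range ((s - 1) / 2 + 1), p ^ (k * i + (s - 2 * i - 1) * (k - 1))) *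
        (rho k 0 p - 1)
      + p ^ (k * (s / 2)) := by
  haveI : NeZero p := ⟨hp.pos.ne'⟩
  set N : ℕ → ℕ := fun r => rho k 0 (p ^ r) with hN
  set P : ℕ → ℕ := fun r =>
    (univ.filter (fun x : Fin k → ZMod (p^r) =>
      (∑ i, x i ^ 2 = 0) ∧ ∃ i, ¬ p ∣ (x i).val)).card with hP
  have hN1 : N 1 = P 1 + 1 := by
    simp only [hN, hP]
    rw [rho_card, split_count p k 1, imp_one p hp k]
  have hrp : rho k 0 p = N 1 := by simp only [hN, pow_one]
  have hrec : ∀ r : ℕ, N (r + 2) = P (r + 2) + p ^ k * N r := by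
    intro r
    simp only [hN, hP]
    rw [rho_card, split_count p k (r+2), imp_count p hp k r, ← rho_card]
  have hPpow : ∀ r : ℕ, 1 ≤ r → P r = p ^ ((r - 1) * (k - 1)) * P 1 := by
    intro r hr
    induction r with
    | zero => omega
    | succ u IH =>
      rcases Nat.eq_zero_or_pos u with rfl | hu1
      · simp
      · have hstep : P (u+1) = p^(k-1) * P u := by
          simp only [hP]
          exact prim_rec p hp hodd k u hu1
        have he : k - 1 + (u-1)*(k-1) = (u + 1 - 1) * (k-1) := by
          have h1 : u + 1 - 1 = u := by omega
          have h2 : u = (u-1) + 1 := by omega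
          rw [h1]; conv_rhs => rw [h2]
          ring
        rw [hstep, IH hu1, ← mul_assoc, ← pow_add, he]
  suffices H : ∀ r : ℕ, N (r + 1) =
      (∑ i ∈ Finset.range (((r+1) - 1) / 2 + 1), p ^ (k * i + ((r+1) - 2 * i - 1) * (k - 1))) *
        (N 1 - 1) + p ^ (k * ((r+1) / 2)) by
    obtain ⟨r, rfl⟩ : ∃ r, s = r + 1 := ⟨s - 1, by omega⟩
    rw [hrp]
    exact H r
  intro r
  induction r using Nat.strong_induction_on with
  | _ r IH =>
    match r with
    | 0 =>
      norm_num [Finset.sum_range_one]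
      omega
    | 1 =>
      have h0 : N 0 = 1 := by simp only [hN, pow_zero]; exact rho_one k
      have h2 := hrec 0
      rw [h0, mul_one] at h2
      have hP1 : P 1 = N 1 - 1 := by omega
      have hP2 : P 2 = p ^ (k-1) * (N 1 - 1) := by
        have h := hPpow 2 (by omega)
        rw [hP1] at h
        have he : (2-1) * (k-1) = k-1 := by omega
        rw [he] at h
        exact h
      norm_num [Finset.sum_range_one] at h2 ⊢
      rw [h2, hP2]
    | (u+2) =>
      have IHu := IH u (by omega)
      have hrec' := hrec (u + 1)
      have hP1 : P 1 = N 1 - 1 := by omega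
      have hPu3 : P (u+1+2) = p ^ ((u+2) * (k-1)) * P 1 := by
        have h := hPpow (u+1+2) (by omega)
        have he : u+1+2-1 = u+2 := by omega
        rw [he] at h
        exact h
      have e23 : u+1+2 = u+2+1 := by omega
      have harith : N (u + 2 + 1) = p ^ ((u+2)*(k-1)) * (N 1 - 1) + p ^ k * N (u + 1) := by
        rw [← e23, hrec', hPu3, hP1]
      have hd1 : ((u + 2 + 1) - 1) / 2 + 1 = ((u+1) - 1)/2 + 1 + 1 := by omega
      have hterm0 : p ^ (k * 0 + ((u + 2 + 1) - 2 * 0 - 1) * (k - 1)) = p ^ ((u+2)*(k-1)) := by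
        have he : (u + 2 + 1) - 2 * 0 - 1 = u + 2 := by omega
        rw [he, Nat.mul_zero, Nat.zero_add]
      have hshift : ∀ i ∈ Finset.range (((u+1) - 1)/2 + 1),
          p ^ (k * (i+1) + ((u + 2 + 1) - 2 * (i+1) - 1) * (k - 1))
          = p ^ k * p ^ (k * i + ((u+1) - 2*i - 1) * (k-1)) := by
        intro i hi
        rw [Finset.mem_range] at hi
        rw [← pow_add]
        congr 1
        have hw1 : (u + 2 + 1) - 2 * (i+1) - 1 = u - 2*i := by omega
        have hw2 : (u+1) - 2*i - 1 = u - 2*i := by omega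
        rw [hw1, hw2]
        ring
      have hsum3 : (∑ i ∈ Finset.range (((u+2+1) - 1)/2 + 1),
            p ^ (k * i + ((u+2+1) - 2 * i - 1) * (k - 1)))
          = p ^ ((u+2)*(k-1))
            + p ^ k * ∑ i ∈ Finset.range (((u+1) - 1)/2 + 1),
                p ^ (k * i + ((u+1) - 2*i - 1) * (k-1)) := by
        rw [hd1, Finset.sum_range_succ', hterm0, Finset.sum_congr rfl hshift, ← Finset.mul_sum]
        exact add_comm _ _
      have hhalf : k * ((u + 2 + 1) / 2) = k + k * ((u + 1) / 2) := by
        have hq : (u + 2 + 1)/2 = (u+1)/2 + 1 := by omega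
        rw [hq]
        ring
      rw [harith, IHu, hsum3, hhalf, pow_add]
      ring
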